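/- Let a, b ≥ 2 be integers, and for each n let (p_k^{(n)}), (q_k^{(n)}) be integer sequences, eventually periodic with preperiods r_n, r'_n and periods dividing s_n, s'_n respectively, with all values of f(p_i^{(n)}, q_j^{(n)}) bounded by M. Then α_n := ∑_{i,j≥0} f(p_i^{(n)}, q_j^{(n)}) a^{−i} b^{−j} is a rational number of the form P_n(a,b) / (a^{r_n}(a^{s_n}−1) b^{r'_n}(b^{s'_n}−1)), where P_n ∈ ℤ[X,Y] has X-degree at most r_n + s_n, Y-degree at most r'_n + s'_n, and coefficients of absolute value at most 4M. -/

import Mathlib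

open Finset

lemma sumgeo (x : ℝ) (hx : 1 < x) (c : ℕ → ℝ) (C : ℝ)
    (hC : ∀ k, |c k| ≤ C) : Summable (fun k => c k / x ^ k) := by
  have hx0 : (0:ℝ) < x := by linarith
  apply Summable.of_norm_bounded (g := fun k => C * (x⁻¹) ^ k)
  · exact (summable_geometric_of_lt_one (by positivity)
      (by rw [inv_lt_one_iff₀]; right; exact hx)).mul_left C
  · intro k
    rw [Real.norm_eq_abs, abs_div, abs_pow, abs_of_pos hx0, inv_pow, div_eq_mul_inv]
    exact mul_le_mul_of_nonneg_right (hC k) (by positivity)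

lemma oneD (x : ℝ) (hx : 1 < x) (c : ℕ → ℝ) (r s : ℕ) (hs : 1 ≤ s)
    (hper : ∀ k, r ≤ k → c (k + s) = c k) (C : ℝ) (hC : ∀ k, |c k| ≤ C) :
    ∑' k, c k / x ^ k =
      ((x ^ s - 1) * (∑ i ∈ range r, c i * x ^ (r - i)) +
        ∑ i ∈ range s, c (r + i) * x ^ (s - i)) / (x ^ r * (x ^ s - 1)) := by
  have hx0 : (0:ℝ) < x := by linarith
  have hxne : x ≠ 0 := ne_of_gt hx0
  have hxs1 : (0:ℝ) < x ^ s - 1 := by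
    have := one_lt_pow₀ hx (by omega : s ≠ 0)
    linarith
  have hsum : Summable (fun k => c k / x ^ k) := sumgeo x hx c C hC
  have hsplit := (Summable.sum_add_tsum_nat_add r hsum).symm
  set g : ℕ → ℝ := fun t => c (t + r) / x ^ (t + r) with hg
  have hgsum : Summable g := by
    simpa [hg] using (summable_nat_add_iff r).2 hsum
  have hgsplit := (Summable.sum_add_tsum_nat_add s hgsum).symm
  have hshift : ∀ t : ℕ, g (t + s) = g t * (x ^ s)⁻¹ := by
    intro t
    have h1 : c (t + s + r) = c (t + r) := by
      have := hper (t + r) (by omega)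
      rw [← this]; ring_nf
    simp only [hg]
    rw [h1, show t + s + r = (t + r) + s by omega, pow_add]
    field_simp
  have htail : ∑' t, g (t + s) = (∑' t, g t) * (x ^ s)⁻¹ := by
    rw [tsum_congr hshift, tsum_mul_right]
  set T := ∑' t, g t with hT
  have hTeq : T = (∑ i ∈ range s, g i) + T * (x ^ s)⁻¹ := by
    conv_lhs => rw [hgsplit]
    rw [htail]
  have hTval : T = (∑ i ∈ range s, g i) * x ^ s / (x ^ s - 1) := by
    have h2 : T * (1 - (x ^ s)⁻¹) = ∑ i ∈ range s, g i := by
      have := hTeq; ring_nf at this ⊢; linarith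
    have h3 : (1 - (x ^ s)⁻¹) = (x ^ s - 1) / x ^ s := by
      field_simp
    rw [h3] at h2
    field_simp at h2 ⊢
    linarith
  have hA : ∑ i ∈ range r, c i * x ^ (r - i) = x ^ r * ∑ i ∈ range r, c i / x ^ i := by
    rw [mul_sum]
    refine sum_congr rfl fun i hi => ?_
    rw [mem_range] at hi
    rw [pow_sub₀ x hxne (le_of_lt hi)]
    ring
  have hB : ∑ i ∈ range s, c (r + i) * x ^ (s - i)
      = x ^ (r + s) * ∑ i ∈ range s, g i := by
    rw [mul_sum]
    refine sum_congr rfl fun i hi => ?_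
    rw [mem_range] at hi
    simp only [hg]
    rw [pow_sub₀ x hxne (le_of_lt hi), pow_add, pow_add,
      show i + r = r + i by omega]
    field_simp
  rw [hsplit, hA, hB, hTval]
  field_simp
  ring

lemma Thelp {R : Type*} [CommRing R] (x : R) (c : ℕ → R) (nlim n : ℕ) (h : n ≤ nlim) :
    ∑ u ∈ range (nlim + 1), (if 1 ≤ u ∧ u ≤ n then c (n - u) else 0) * x ^ u
      = ∑ j ∈ range n, c j * x ^ (n - j) := by
  rw [← Finset.sum_subset (Finset.range_subset_range.2 (by omega) : range (n+1) ⊆ range (nlim+1))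
    (by intro u hu hnu; rw [mem_range] at *; rw [if_neg (by omega)]; ring)]
  rw [Finset.sum_range_succ']
  rw [if_neg (by omega), zero_mul, add_zero]
  rw [← Finset.sum_range_reflect (fun j => c j * x ^ (n - j)) n]
  refine sum_congr rfl fun i hi => ?_
  rw [mem_range] at hi
  rw [if_pos (by omega : 1 ≤ i + 1 ∧ i + 1 ≤ n)]
  congr 1
  · congr 1; omega
  · congr 1; omega

lemma Talg {R : Type*} [CommRing R] (x : R) (c : ℕ → R) (r s : ℕ) :
    ∑ u ∈ range (r + s + 1),
      ((if 1 ≤ u ∧ u ≤ r + s then c (r + s - u) else 0)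
        - (if 1 ≤ u ∧ u ≤ r then c (r - u) else 0)) * x ^ u
      = (x ^ s - 1) * (∑ i ∈ range r, c i * x ^ (r - i))
        + ∑ i ∈ range s, c (r + i) * x ^ (s - i) := by
  simp only [sub_mul, Finset.sum_sub_distrib]
  rw [Thelp x c (r+s) (r+s) le_rfl, Thelp x c (r+s) r (by omega)]
  have hsplit : ∑ j ∈ range (r + s), c j * x ^ (r + s - j)
      = ∑ i ∈ range r, c i * x ^ (r + s - i) + ∑ i ∈ range s, c (r + i) * x ^ (s - i) := by
    rw [Finset.sum_range_add]
    congr 1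
    refine sum_congr rfl fun i hi => ?_
    congr 2
    omega
  have hxsA : ∑ i ∈ range r, c i * x ^ (r + s - i)
      = x ^ s * ∑ i ∈ range r, c i * x ^ (r - i) := by
    rw [mul_sum]
    refine sum_congr rfl fun i hi => ?_
    rw [mem_range] at hi
    rw [show r + s - i = (r - i) + s by omega, pow_add]
    ring
  rw [hsplit, hxsA]
  ring

lemma per_reduce {α : Sort*} (g : ℕ → α) (r s : ℕ) (hs : 1 ≤ s)
    (h : ∀ k, r ≤ k → g (k + s) = g k) : ∀ k, r ≤ k → g k = g (r + (k - r) % s) := by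
  intro k
  induction k using Nat.strong_induction_on with
  | _ k ih =>
    intro hk
    by_cases h1 : k < r + s
    · rw [Nat.mod_eq_of_lt (by omega)]
      congr 1
      omega
    · have hks : r ≤ k - s := by omega
      have e1 : g k = g (k - s) := by
        rw [← h (k - s) hks]
        congr 1
        omega
      rw [e1, ih (k - s) (by omega) hks]
      have e2 : (k - s - r) % s = (k - r) % s := by
        rw [show k - r = (k - s - r) + s by omega, Nat.add_mod_right]
      rw [e2]

lemma fin2_eq (m : Fin 2 →₀ ℕ) : m = Finsupp.single 0 (m 0) + Finsupp.single 1 (m 1) := by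
  ext i
  fin_cases i <;> simp [Finsupp.single_apply]

lemma coeffP (n1 n2 : ℕ) (cc : ℕ → ℕ → ℤ) (m : Fin 2 →₀ ℕ) :
    MvPolynomial.coeff m (∑ u ∈ range (n1+1), ∑ v ∈ range (n2+1),
      MvPolynomial.monomial (Finsupp.single 0 u + Finsupp.single 1 v) (cc u v))
    = if m 0 ≤ n1 ∧ m 1 ≤ n2 then cc (m 0) (m 1) else 0 := by
  have key : ∀ u v : ℕ, (Finsupp.single 0 u + Finsupp.single (1:Fin 2) v = m)
      ↔ (v = m 1 ∧ u = m 0) := by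
    intro u v
    constructor
    · intro h
      constructor
      · simpa [Finsupp.single_apply] using DFunLike.congr_fun h 1
      · simpa [Finsupp.single_apply] using DFunLike.congr_fun h 0
    · rintro ⟨hv, hu⟩
      subst hv; subst hu
      exact (fin2_eq m).symm
  simp only [MvPolynomial.coeff_sum, MvPolynomial.coeff_monomial, key, ite_and,
    Finset.sum_ite_eq', mem_range]
  by_cases h1 : m 1 < n2 + 1 <;> by_cases h0 : m 0 < n1 + 1 <;>
    simp [h1, h0] <;> omega

lemma evalP (A B : ℤ) (n1 n2 : ℕ) (cc : ℕ → ℕ → ℤ) :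
    MvPolynomial.eval ![A, B] (∑ u ∈ range (n1+1), ∑ v ∈ range (n2+1),
      MvPolynomial.monomial (Finsupp.single 0 u + Finsupp.single 1 v) (cc u v))
    = ∑ u ∈ range (n1+1), ∑ v ∈ range (n2+1), cc u v * (A ^ u * B ^ v) := by
  simp only [map_sum, MvPolynomial.eval_monomial]
  refine sum_congr rfl fun u _ => sum_congr rfl fun v _ => ?_
  congr 1
  rw [Finsupp.prod_add_index (by simp) (by intros; rw [pow_add])]
  simp [Finsupp.prod_single_index]

/-- The rational expression for the double series attached to a pair of eventually
periodic integer sequences: `α_n = P_n(a,b) / (a^{r}(a^{s}−1) b^{r'}(b^{s'}−1))`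
with controlled degrees and coefficients bounded by `4M`. -/
theorem stmt_9 (a b : ℕ) (ha : 2 ≤ a) (hb : 2 ≤ b) (f : ℤ → ℤ → ℤ)
    (p q : ℕ → ℤ) (r s r' s' : ℕ) (hs : 1 ≤ s) (hs' : 1 ≤ s')
    (hp : ∀ k, r ≤ k → p (k + s) = p k) (hq : ∀ k, r' ≤ k → q (k + s') = q k)
    (M : ℤ) (hM : ∀ i j, |f (p i) (q j)| ≤ M) :
    Summable (fun ij : ℕ × ℕ => (f (p ij.1) (q ij.2) : ℝ) / ((a : ℝ) ^ ij.1 * (b : ℝ) ^ ij.2)) ∧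
    ∃ P : MvPolynomial (Fin 2) ℤ,
      P.degreeOf 0 ≤ r + s ∧ P.degreeOf 1 ≤ r' + s' ∧
      (∀ m : Fin 2 →₀ ℕ, |MvPolynomial.coeff m P| ≤ 4 * M) ∧
      (∑' ij : ℕ × ℕ, (f (p ij.1) (q ij.2) : ℝ) / ((a : ℝ) ^ ij.1 * (b : ℝ) ^ ij.2))
        = ((MvPolynomial.eval ![(a : ℤ), (b : ℤ)] P : ℤ) : ℝ) /
            ((a : ℝ) ^ r * ((a : ℝ) ^ s - 1) * ((b : ℝ) ^ r' * ((b : ℝ) ^ s' - 1))) := by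
  have hx : (1:ℝ) < (a:ℝ) := by exact_mod_cast (by omega : 1 < a)
  have hy : (1:ℝ) < (b:ℝ) := by exact_mod_cast (by omega : 1 < b)
  have hx0 : (0:ℝ) < (a:ℝ) := by linarith
  have hy0 : (0:ℝ) < (b:ℝ) := by linarith
  have hxne : (a:ℝ) ≠ 0 := ne_of_gt hx0
  have hyne : (b:ℝ) ≠ 0 := ne_of_gt hy0
  have hxs : (0:ℝ) < (a:ℝ) ^ s - 1 := by
    have := one_lt_pow₀ hx (by omega : s ≠ 0); linarith
  have hys : (0:ℝ) < (b:ℝ) ^ s' - 1 := by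
    have := one_lt_pow₀ hy (by omega : s' ≠ 0); linarith
  have hM0 : (0:ℤ) ≤ M := le_trans (abs_nonneg _) (hM 0 0)
  -- 2D summability
  have hsum2 : Summable (fun ij : ℕ × ℕ =>
      (f (p ij.1) (q ij.2) : ℝ) / ((a : ℝ) ^ ij.1 * (b : ℝ) ^ ij.2)) := by
    have hgeo : Summable (fun ij : ℕ × ℕ =>
        (M:ℝ) * (((a:ℝ)⁻¹) ^ ij.1 * ((b:ℝ)⁻¹) ^ ij.2)) := by
      apply Summable.mul_left
      exact (summable_geometric_of_lt_one (by positivity)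
          (by rw [inv_lt_one_iff₀]; right; exact hx)).mul_of_nonneg
        (summable_geometric_of_lt_one (by positivity)
          (by rw [inv_lt_one_iff₀]; right; exact hy))
        (fun i => by positivity) (fun j => by positivity)
    apply Summable.of_norm_bounded hgeo
    intro ij
    have hD : (0:ℝ) < (a:ℝ) ^ ij.1 * (b:ℝ) ^ ij.2 := by positivity
    rw [Real.norm_eq_abs, abs_div, abs_of_pos hD, inv_pow, inv_pow, ← mul_inv,
      ← div_eq_mul_inv (M:ℝ)]
    exact (div_le_div_iff_of_pos_right hD).2 (by exact_mod_cast hM ij.1 ij.2)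
  refine ⟨hsum2, ?_⟩
  -- definitions
  set F : ℕ → ℕ → ℤ := fun i j => f (p i) (q j) with hF
  set NbZ : ℕ → ℤ := fun i =>
    ((b:ℤ) ^ s' - 1) * (∑ j ∈ range r', F i j * (b:ℤ) ^ (r' - j))
      + ∑ j ∈ range s', F i (r' + j) * (b:ℤ) ^ (s' - j) with hNbZ
  set NY : ℕ → ℕ → ℤ := fun i v =>
    (if 1 ≤ v ∧ v ≤ r' + s' then F i (r' + s' - v) else 0)
      - (if 1 ≤ v ∧ v ≤ r' then F i (r' - v) else 0) with hNY
  set cc : ℕ → ℕ → ℤ := fun u v =>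
    (if 1 ≤ u ∧ u ≤ r + s then NY (r + s - u) v else 0)
      - (if 1 ≤ u ∧ u ≤ r then NY (r - u) v else 0) with hcc
  set P : MvPolynomial (Fin 2) ℤ := ∑ u ∈ range (r + s + 1), ∑ v ∈ range (r' + s' + 1),
    MvPolynomial.monomial (Finsupp.single 0 u + Finsupp.single 1 v) (cc u v) with hP
  have hco : ∀ m : Fin 2 →₀ ℕ, MvPolynomial.coeff m P
      = if m 0 ≤ r + s ∧ m 1 ≤ r' + s' then cc (m 0) (m 1) else 0 := by
    intro m
    rw [hP]
    exact coeffP _ _ _ m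
  have hNYb : ∀ i v, |NY i v| ≤ 2 * M := by
    intro i v
    have h1 : |(if 1 ≤ v ∧ v ≤ r' + s' then F i (r' + s' - v) else 0)| ≤ M := by
      split_ifs with h
      · exact hM _ _
      · simpa using hM0
    have h2 : |(if 1 ≤ v ∧ v ≤ r' then F i (r' - v) else 0)| ≤ M := by
      split_ifs with h
      · exact hM _ _
      · simpa using hM0
    calc |NY i v| ≤ _ + _ := by rw [hNY]; exact abs_sub _ _
    _ ≤ 2 * M := by linarith
  have hccb : ∀ u v, |cc u v| ≤ 4 * M := by
    intro u v
    have h1 : |(if 1 ≤ u ∧ u ≤ r + s then NY (r + s - u) v else 0)| ≤ 2 * M := by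
      split_ifs with h
      · exact hNYb _ _
      · simpa using by linarith
    have h2 : |(if 1 ≤ u ∧ u ≤ r then NY (r - u) v else 0)| ≤ 2 * M := by
      split_ifs with h
      · exact hNYb _ _
      · simpa using by linarith
    calc |cc u v| ≤ _ + _ := by rw [hcc]; exact abs_sub _ _
    _ ≤ 4 * M := by linarith
  refine ⟨P, ?_, ?_, ?_, ?_⟩
  · rw [MvPolynomial.degreeOf_le_iff]
    intro m hm
    rw [MvPolynomial.mem_support_iff, hco m] at hm
    split_ifs at hm with h
    · exact h.1
    · exact absurd rfl hm
  · rw [MvPolynomial.degreeOf_le_iff]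
    intro m hm
    rw [MvPolynomial.mem_support_iff, hco m] at hm
    split_ifs at hm with h
    · exact h.2
    · exact absurd rfl hm
  · intro m
    rw [hco m]
    split_ifs with h
    · exact hccb _ _
    · rw [abs_zero]; linarith
  -- analytic part
  · have hNbZper : ∀ k, r ≤ k → NbZ (k + s) = NbZ k := by
      intro k hk
      simp only [hNbZ, hF, hp k hk]
    have hNbZred := per_reduce NbZ r s hs hNbZper
    set C : ℝ := ∑ k ∈ range (r + s), |((NbZ k : ℤ) : ℝ)| with hCdef
    have hCb : ∀ k, |((NbZ k : ℤ) : ℝ)| ≤ C := by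
      intro k
      by_cases hk : k < r + s
      · exact single_le_sum (f := fun i => |((NbZ i : ℤ) : ℝ)|)
          (fun i _ => abs_nonneg _) (mem_range.2 hk)
      · rw [hNbZred k (by omega)]
        exact single_le_sum (f := fun i => |((NbZ i : ℤ) : ℝ)|)
          (fun i _ => abs_nonneg _)
          (mem_range.2 (by have := Nat.mod_lt (k - r) (show 0 < s by omega); omega))
    have hinner : ∀ i, ∑' j, ((F i j : ℤ) : ℝ) / (b:ℝ) ^ j
        = ((NbZ i : ℤ) : ℝ) / ((b:ℝ) ^ r' * ((b:ℝ) ^ s' - 1)) := by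
      intro i
      rw [oneD (b:ℝ) hy (fun j => ((F i j : ℤ) : ℝ)) r' s' hs'
        (fun k hk => by simp only [hF]; rw [hq k hk]) (M:ℝ)
        (fun j => by simp only [hF]; exact_mod_cast hM i j)]
      congr 1
      simp only [hNbZ]
      push_cast
      ring
    rw [Summable.tsum_prod hsum2]
    have hfiber : ∀ i, ∑' j, ((f (p i) (q j) : ℤ) : ℝ) / ((a:ℝ) ^ i * (b:ℝ) ^ j)
        = (((NbZ i : ℤ) : ℝ) / ((b:ℝ) ^ r' * ((b:ℝ) ^ s' - 1))) * ((a:ℝ) ^ i)⁻¹ := by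
      intro i
      have e : ∀ j, ((f (p i) (q j) : ℤ) : ℝ) / ((a:ℝ) ^ i * (b:ℝ) ^ j)
          = (((F i j : ℤ) : ℝ) / (b:ℝ) ^ j) * ((a:ℝ) ^ i)⁻¹ := by
        intro j
        simp only [hF]
        rw [mul_comm ((a:ℝ) ^ i), ← div_div, div_eq_mul_inv]
      rw [tsum_congr e, tsum_mul_right, hinner i]
    rw [tsum_congr hfiber]
    have e2 : ∀ i, (((NbZ i : ℤ) : ℝ) / ((b:ℝ) ^ r' * ((b:ℝ) ^ s' - 1))) * ((a:ℝ) ^ i)⁻¹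
        = (((NbZ i : ℤ) : ℝ) / (a:ℝ) ^ i) * (((b:ℝ) ^ r' * ((b:ℝ) ^ s' - 1)))⁻¹ := by
      intro i
      rw [div_eq_mul_inv, div_eq_mul_inv]
      ring
    rw [tsum_congr e2, tsum_mul_right]
    rw [oneD (a:ℝ) hx (fun i => ((NbZ i : ℤ) : ℝ)) r s hs
      (fun k hk => congrArg (fun z : ℤ => (z : ℝ)) (hNbZper k hk)) C hCb]
    -- evaluate P
    have hevalZ : MvPolynomial.eval ![(a:ℤ), (b:ℤ)] P
        = ((a:ℤ) ^ s - 1) * (∑ i ∈ range r, NbZ i * (a:ℤ) ^ (r - i))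
          + ∑ i ∈ range s, NbZ (r + i) * (a:ℤ) ^ (s - i) := by
      rw [hP, evalP, ← Talg (a:ℤ) NbZ r s]
      refine sum_congr rfl fun u hu => ?_
      have hN : ∀ i, NbZ i = ∑ v ∈ range (r' + s' + 1), NY i v * (b:ℤ) ^ v := by
        intro i
        simp only [hNbZ, hNY]
        exact (Talg (b:ℤ) (F i) r' s').symm
      have hsub : (if 1 ≤ u ∧ u ≤ r + s then NbZ (r + s - u) else 0)
            - (if 1 ≤ u ∧ u ≤ r then NbZ (r - u) else 0)
          = ∑ v ∈ range (r' + s' + 1), cc u v * (b:ℤ) ^ v := by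
        simp only [hcc, sub_mul, Finset.sum_sub_distrib]
        congr 1 <;> split_ifs with h <;> simp [hN]
      rw [hsub, sum_mul]
      exact sum_congr rfl fun v hv => by ring
    have hevalR : ((MvPolynomial.eval ![(a:ℤ), (b:ℤ)] P : ℤ) : ℝ)
        = ((a:ℝ) ^ s - 1) * (∑ i ∈ range r, ((NbZ i : ℤ) : ℝ) * (a:ℝ) ^ (r - i))
          + ∑ i ∈ range s, ((NbZ (r + i) : ℤ) : ℝ) * (a:ℝ) ^ (s - i) := by
      rw [hevalZ]
      push_cast
      ring
    rw [hevalR]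
    field_simp
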